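/- Properties of the slope function ν in the integration result: Under the assumptions and with the notation of the integration proposition (κ ∈ (1,2), A ⊂ [0,κ) finite, U bounded and periodic and continuous in its second variable, local splitting constant M̄, three-point continuity constant M̄̄): (i) ν is uniquely determined by U: if ν and ν̃ both make sup_{x≠y} d^{−κ}(y,x)|U(x,y) − U(x,x) − ν(x)(y−x)₁| finite, then ν = ν̃; (ii) if U is in addition periodic in its first variable, then ν is periodic; (iii) if 0 ∉ A, then ν is Hölder continuous with exponent (κ−1) ∧ min A: |ν(y) − ν(x)| ≤ C(M̄ + M̄̄)(d^{κ−1}(y,x) + Σ_{β∈A} d^{β}(y,x)) for all x,y, with C depending only on λ, κ and A. -/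
import Mathlib


open MeasureTheory

noncomputable section

/-- The parabolic metric `d(x,y) = |x₁−y₁| + √|x₂−y₂|` on `ℝ²`. -/
def pdist (x y : ℝ × ℝ) : ℝ := |x.1 - y.1| + Real.sqrt |x.2 - y.2|

/-- The kernel `ψ_T`, the inverse Fourier transform of `exp(−T(k₁⁴+k₂²))`. -/
def psiK (T : ℝ) (x : ℝ × ℝ) : ℝ :=
  ∫ k : ℝ × ℝ, Real.exp (-(T * (k.1 ^ 4 + k.2 ^ 2))) *
    Real.cos (2 * Real.pi * (k.1 * x.1 + k.2 * x.2))

/-- Partial derivative in the first (space-like) variable. -/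
def pd1 (g : ℝ × ℝ → ℝ) (x : ℝ × ℝ) : ℝ := deriv (fun s => g (s, x.2)) x.1

/-- Partial derivative in the second (time-like) variable. -/
def pd2 (g : ℝ × ℝ → ℝ) (x : ℝ × ℝ) : ℝ := deriv (fun s => g (x.1, s)) x.2

/-- Mollification of a scalar function at scale `t`. -/
def mollS (t : ℝ) (g : ℝ × ℝ → ℝ) (x : ℝ × ℝ) : ℝ :=
  ∫ y : ℝ × ℝ, psiK t (x - y) * g y

/-- `[0,1)²`-periodicity. -/
def PeriodicFn {E : Type*} (g : ℝ × ℝ → E) : Prop :=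
  ∀ (x : ℝ × ℝ) (k : ℤ × ℤ), g (x.1 + k.1, x.2 + k.2) = g x

lemma pdist_nonneg (x y : ℝ × ℝ) : 0 ≤ pdist x y :=
  add_nonneg (abs_nonneg _) (Real.sqrt_nonneg _)

lemma pdist_pos {x y : ℝ × ℝ} (h : x ≠ y) : 0 < pdist x y := by
  rcases (pdist_nonneg x y).lt_or_eq with h' | h'
  · exact h'
  · exfalso; apply h
    have hp : |x.1 - y.1| + Real.sqrt |x.2 - y.2| = 0 := h'.symm
    have ha := abs_nonneg (x.1 - y.1)
    have hb := Real.sqrt_nonneg |x.2 - y.2|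
    have h1 : |x.1 - y.1| = 0 := by linarith
    have h1' : Real.sqrt |x.2 - y.2| = 0 := by linarith
    have e1 : x.1 = y.1 := by have := abs_eq_zero.mp h1; linarith
    have e2 : x.2 = y.2 := by
      have h2 : |x.2 - y.2| ≤ 0 := Real.sqrt_eq_zero'.mp h1'
      have h3 : |x.2 - y.2| = 0 := le_antisymm h2 (abs_nonneg _)
      have := abs_eq_zero.mp h3; linarith
    exact Prod.ext e1 e2

lemma eq_of_abs_sub_le_rpow {κ : ℝ} (hκ : 1 < κ) {a b M : ℝ}
    (h : ∀ t : ℝ, 0 < t → |a - b| * t ≤ M * t ^ κ) : a = b := by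
  by_contra hab
  have hc : 0 < |a - b| := abs_pos.mpr (sub_ne_zero.mpr hab)
  set c := |a - b| with hcdef
  have hM : 0 ≤ M := by
    have := h 1 one_pos
    rw [Real.one_rpow] at this
    nlinarith
  have hMp : 0 < M + 1 := by linarith
  have hq : 0 < c / (2 * (M + 1)) := by positivity
  set t := min 1 ((c / (2 * (M + 1))) ^ ((κ - 1)⁻¹ : ℝ)) with htdef
  have ht0 : 0 < t := lt_min one_pos (Real.rpow_pos_of_pos hq _)
  have hineq := h t ht0
  have htk : t ^ κ = t ^ (κ - 1) * t := by
    have h0 := Real.rpow_add ht0 (κ - 1) 1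
    rw [Real.rpow_one] at h0
    rw [show κ - 1 + 1 = κ by ring] at h0
    exact h0
  have hle : t ^ (κ - 1) ≤ c / (2 * (M + 1)) := by
    have h1 : t ≤ (c / (2 * (M + 1))) ^ ((κ - 1)⁻¹ : ℝ) := min_le_right _ _
    have h2 := Real.rpow_le_rpow (le_of_lt ht0) h1 (by linarith : (0:ℝ) ≤ κ - 1)
    rwa [← Real.rpow_mul (le_of_lt hq), inv_mul_cancel₀ (by linarith : κ - 1 ≠ 0),
      Real.rpow_one] at h2
  have hkey : c * t ≤ M * (c / (2 * (M + 1))) * t := by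
    calc c * t ≤ M * t ^ κ := hineq
      _ = M * t ^ (κ - 1) * t := by rw [htk]; ring
      _ ≤ M * (c / (2 * (M + 1))) * t :=
          mul_le_mul_of_nonneg_right (mul_le_mul_of_nonneg_left hle hM) (le_of_lt ht0)
  have hlt : M * (c / (2 * (M + 1))) < c := by
    rw [mul_div_assoc', div_lt_iff₀ (by positivity)]
    nlinarith
  nlinarith [mul_lt_mul_of_pos_right hlt ht0]

lemma slope_unique_pt {κ : ℝ} (hκ : 1 < κ) (f : ℝ × ℝ → ℝ) (x : ℝ × ℝ) {a b : ℝ} (M M' : ℝ)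
    (h1 : ∀ y, |f y - f x - a * (y.1 - x.1)| ≤ M * pdist y x ^ κ)
    (h2 : ∀ y, |f y - f x - b * (y.1 - x.1)| ≤ M' * pdist y x ^ κ) : a = b := by
  apply eq_of_abs_sub_le_rpow hκ (M := M + M')
  intro t ht
  set y : ℝ × ℝ := (x.1 + t, x.2) with hy
  have hp : pdist y x = t := by
    simp [pdist, hy, abs_of_pos ht]
  have hy1 : y.1 - x.1 = t := by simp [hy]
  have e1 := h1 y; have e2 := h2 y
  rw [hp, hy1] at e1 e2
  have h3 : |a * t - b * t| ≤ |f y - f x - b * t| + |f y - f x - a * t| := by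
    have := abs_sub (f y - f x - b * t) (f y - f x - a * t)
    have heq : (f y - f x - b * t) - (f y - f x - a * t) = a * t - b * t := by ring
    rwa [heq] at this
  have h4 : |a - b| * t = |a * t - b * t| := by
    rw [show a * t - b * t = (a - b) * t by ring, abs_mul, abs_of_pos ht]
  rw [h4]
  calc |a * t - b * t| ≤ |f y - f x - b * t| + |f y - f x - a * t| := h3
    _ ≤ M' * t ^ κ + M * t ^ κ := add_le_add e2 e1
    _ = (M + M') * t ^ κ := by ring


/-- **Properties of the slope function ν.** -/
theorem slope_function_properties (lam : ℝ) (hlam0 : 0 < lam) (hlam1 : lam < 1)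
    (κ : ℝ) (hκ1 : 1 < κ) (hκ2 : κ < 2)
    (A : Finset ℝ) (hA : ∀ β ∈ A, 0 ≤ β ∧ β < κ) :
    ∃ C : ℝ, 0 < C ∧
      ∀ U : ℝ × ℝ → ℝ × ℝ → ℝ,
        (∃ B : ℝ, ∀ x y, |U x y| ≤ B) →
        (∀ x, PeriodicFn (U x)) →
        (∀ x, Continuous (U x)) →
      ∀ a : ℝ × ℝ → ℝ, (∀ x, a x ∈ Set.Icc lam lam⁻¹) →
      ∀ Mb : ℝ, 0 ≤ Mb →
        (∀ (x : ℝ × ℝ) (L T : ℝ), 0 < L → L ≤ 1 → 0 < T → T ^ (4⁻¹ : ℝ) ≤ 1 →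
          ∃ c : ℝ, ∀ y : ℝ × ℝ, pdist x y ≤ L →
            (T ^ (4⁻¹ : ℝ)) ^ (2 : ℝ) *
                |pd2 (mollS T (U x)) y - a x * pd1 (pd1 (mollS T (U x))) y - c| ≤
              Mb * ∑ β ∈ A, (T ^ (4⁻¹ : ℝ)) ^ β * L ^ (κ - β)) →
      ∀ γfn : ℝ × ℝ → ℝ × ℝ → ℝ,
        Continuous (fun p : (ℝ × ℝ) × (ℝ × ℝ) => γfn p.1 p.2) →
      ∀ Mbb : ℝ, 0 ≤ Mbb →
        (∀ x y z : ℝ × ℝ,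
          |U x z - U x y - U y z + U y y - γfn x y * (z.1 - y.1)| ≤
            Mbb * ∑ β ∈ A, pdist y x ^ β * pdist z y ^ (κ - β)) →
      -- (i) uniqueness of ν
      (∀ ν ν' : ℝ × ℝ → ℝ,
        (∃ M : ℝ, ∀ x y : ℝ × ℝ,
          |U x y - U x x - ν x * (y.1 - x.1)| ≤ M * pdist y x ^ κ) →
        (∃ M : ℝ, ∀ x y : ℝ × ℝ,
          |U x y - U x x - ν' x * (y.1 - x.1)| ≤ M * pdist y x ^ κ) →
        ν = ν') ∧
      -- (ii) periodicity of ν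
      (∀ ν : ℝ × ℝ → ℝ,
        (∃ M : ℝ, ∀ x y : ℝ × ℝ,
          |U x y - U x x - ν x * (y.1 - x.1)| ≤ M * pdist y x ^ κ) →
        (∀ (x y : ℝ × ℝ) (k : ℤ × ℤ), U (x.1 + k.1, x.2 + k.2) y = U x y) →
        PeriodicFn ν) ∧
      -- (iii) Hölder continuity of ν when 0 ∉ A
      ((0 : ℝ) ∉ A →
        ∀ (ν : ℝ × ℝ → ℝ) (Mν : ℝ), 0 ≤ Mν →
        (∀ x y : ℝ × ℝ,
          |U x y - U x x - ν x * (y.1 - x.1)| ≤ Mν * pdist y x ^ κ) →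
        ∀ x y : ℝ × ℝ,
          |ν y - ν x| ≤ C * (Mν + Mb + Mbb) *
            (pdist y x ^ (κ - 1) + ∑ β ∈ A, pdist y x ^ β)) := by
  refine ⟨(2:ℝ) ^ κ + 2 + (A.card : ℝ), by positivity, ?_⟩
  intro U hUbd hUper hUcont a ha Mb hMb _hMoll γfn hγcont Mbb hMbb h3pt
  refine ⟨?_, ?_, ?_⟩
  · -- (i)
    rintro ν ν' ⟨M, hM⟩ ⟨M', hM'⟩
    funext x
    exact slope_unique_pt hκ1 (U x) x M M' (fun y => hM x y) (fun y => hM' x y)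
  · -- (ii)
    rintro ν ⟨M, hM⟩ hUper1 x k
    apply slope_unique_pt hκ1 (U x) x M M ?_ (fun y => hM x y)
    intro y
    have h := hM (x.1 + k.1, x.2 + k.2) (y.1 + k.1, y.2 + k.2)
    have e1 : U (x.1 + (k.1:ℝ), x.2 + (k.2:ℝ)) (y.1 + (k.1:ℝ), y.2 + (k.2:ℝ)) = U x y := by
      rw [hUper1 x _ k]
      exact hUper x y k
    have e2 : U (x.1 + (k.1:ℝ), x.2 + (k.2:ℝ)) (x.1 + (k.1:ℝ), x.2 + (k.2:ℝ)) = U x x := by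
      rw [hUper1 x _ k]
      exact hUper x x k
    have e3 : (y.1 + (k.1:ℝ)) - (x.1 + (k.1:ℝ)) = y.1 - x.1 := by ring
    have e4 : pdist (y.1 + (k.1:ℝ), y.2 + (k.2:ℝ)) (x.1 + (k.1:ℝ), x.2 + (k.2:ℝ)) =
        pdist y x := by
      simp only [pdist]
      congr 2 <;> ring_nf
    simp only [e1, e2, e3, e4] at h
    exact h
  · -- (iii)
    intro _h0A ν Mν hMν hν x y
    by_cases hxy : y = x
    · subst hxy
      have h1 : |ν y - ν y| = 0 := by simp
      rw [h1]
      have hP : (0:ℝ) ≤ pdist y y ^ (κ - 1) := Real.rpow_nonneg (pdist_nonneg _ _) _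
      have hQ : (0:ℝ) ≤ ∑ β ∈ A, pdist y y ^ β :=
        Finset.sum_nonneg fun β _ => Real.rpow_nonneg (pdist_nonneg _ _) _
      have hC : (0:ℝ) ≤ (2:ℝ) ^ κ + 2 + (A.card : ℝ) := by positivity
      have hK : (0:ℝ) ≤ Mν + Mb + Mbb := by linarith
      exact mul_nonneg (mul_nonneg hC hK) (by linarith)
    · set s := pdist y x with hsdef
      have hs : 0 < s := pdist_pos hxy
      set z : ℝ × ℝ := (y.1 + s, y.2) with hz
      set z' : ℝ × ℝ := (y.1 + 1, y.2) with hz'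
      have hpzy : pdist z y = s := by simp [pdist, hz, abs_of_pos hs]
      have hpz'y : pdist z' y = 1 := by simp [pdist, hz']
      have hpzx : pdist z x ≤ 2 * s := by
        have h1 : |z.1 - x.1| ≤ |y.1 - x.1| + s := by
          have : z.1 - x.1 = (y.1 - x.1) + s := by simp [hz]; ring
          rw [this]
          calc |(y.1 - x.1) + s| ≤ |y.1 - x.1| + |s| := abs_add_le _ _
            _ = |y.1 - x.1| + s := by rw [abs_of_pos hs]
        have h2 : pdist z x = |z.1 - x.1| + Real.sqrt |y.2 - x.2| := by simp [pdist, hz]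
        have h3 : s = |y.1 - x.1| + Real.sqrt |y.2 - x.2| := rfl
        rw [h2]; rw [h3]; linarith
      -- periodicity identities for z'
      have hz'1 : U x z' = U x y := by
        have := hUper x y (1, 0)
        simpa [hz'] using this
      have hz'2 : U y z' = U y y := by
        have := hUper y y (1, 0)
        simpa [hz'] using this
      -- the five estimates
      have hκ0 : (0:ℝ) ≤ κ := by linarith
      have e1 : |U x z - U x x - ν x * ((y.1 - x.1) + s)| ≤ Mν * ((2:ℝ) ^ κ * s ^ κ) := by
        have h := hν x z
        have hz1 : z.1 - x.1 = (y.1 - x.1) + s := by simp [hz]; ring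
        rw [hz1] at h
        have hmono : pdist z x ^ κ ≤ (2 * s) ^ κ :=
          Real.rpow_le_rpow (pdist_nonneg _ _) hpzx hκ0
        have h2s : ((2:ℝ) * s) ^ κ = (2:ℝ) ^ κ * s ^ κ :=
          Real.mul_rpow (by norm_num) (le_of_lt hs)
        calc |U x z - U x x - ν x * ((y.1 - x.1) + s)| ≤ Mν * pdist z x ^ κ := h
          _ ≤ Mν * ((2:ℝ) ^ κ * s ^ κ) := by
              rw [← h2s]; exact mul_le_mul_of_nonneg_left hmono hMν
      have e2 : |U x y - U x x - ν x * (y.1 - x.1)| ≤ Mν * s ^ κ := hν x y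
      have e3 : |U y z - U y y - ν y * s| ≤ Mν * s ^ κ := by
        have h := hν y z
        have hz1 : z.1 - y.1 = s := by simp [hz]
        rw [hz1, hpzy] at h
        exact h
      have e4 : |U x z - U x y - U y z + U y y - γfn x y * s| ≤ Mbb * ((A.card : ℝ) * s ^ κ) := by
        have h := h3pt x y z
        have hz1 : z.1 - y.1 = s := by simp [hz]
        rw [hz1, hpzy, ← hsdef] at h
        have hsum : ∑ β ∈ A, s ^ β * s ^ (κ - β) = (A.card : ℝ) * s ^ κ := by
          have : ∀ β ∈ A, s ^ β * s ^ (κ - β) = s ^ κ := by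
            intro β _
            rw [← Real.rpow_add hs, show β + (κ - β) = κ by ring]
          rw [Finset.sum_congr rfl this, Finset.sum_const, nsmul_eq_mul]
        rwa [hsum] at h
      have e5 : |γfn x y| ≤ Mbb * ∑ β ∈ A, s ^ β := by
        have h := h3pt x y z'
        have hz1 : z'.1 - y.1 = 1 := by simp [hz']
        rw [hz1, hpz'y, ← hsdef, hz'1, hz'2] at h
        have hsum : ∑ β ∈ A, s ^ β * (1:ℝ) ^ (κ - β) = ∑ β ∈ A, s ^ β := by
          simp [Real.one_rpow]
        rw [hsum] at h
        have : U x y - U x y - U y y + U y y - γfn x y * 1 = -γfn x y := by ring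
        rw [this, abs_neg] at h
        exact h
      -- combine
      have hcomb : |ν x - ν y - γfn x y| * s ≤
          (((2:ℝ) ^ κ + 2) * Mν + (A.card : ℝ) * Mbb) * s ^ κ := by
        have hid : (ν x - ν y - γfn x y) * s =
            -((U x z - U x x - ν x * ((y.1 - x.1) + s))
              - (U x y - U x x - ν x * (y.1 - x.1))
              - (U y z - U y y - ν y * s)
              - (U x z - U x y - U y z + U y y - γfn x y * s)) := by ring
        have habs : |(ν x - ν y - γfn x y) * s| ≤
            Mν * ((2:ℝ) ^ κ * s ^ κ) + Mν * s ^ κ + Mν * s ^ κ + Mbb * ((A.card : ℝ) * s ^ κ) := by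
          rw [hid, abs_neg]
          have t1 := abs_sub ((U x z - U x x - ν x * ((y.1 - x.1) + s))
              - (U x y - U x x - ν x * (y.1 - x.1))
              - (U y z - U y y - ν y * s))
            (U x z - U x y - U y z + U y y - γfn x y * s)
          have t2 := abs_sub ((U x z - U x x - ν x * ((y.1 - x.1) + s))
              - (U x y - U x x - ν x * (y.1 - x.1)))
            (U y z - U y y - ν y * s)
          have t3 := abs_sub (U x z - U x x - ν x * ((y.1 - x.1) + s))
            (U x y - U x x - ν x * (y.1 - x.1))
          linarith
        rw [abs_mul, abs_of_pos hs] at habs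
        calc |ν x - ν y - γfn x y| * s ≤
            Mν * ((2:ℝ) ^ κ * s ^ κ) + Mν * s ^ κ + Mν * s ^ κ + Mbb * ((A.card : ℝ) * s ^ κ) :=
              habs
          _ = (((2:ℝ) ^ κ + 2) * Mν + (A.card : ℝ) * Mbb) * s ^ κ := by ring
      have hsκ : s ^ κ = s ^ (κ - 1) * s := by
        have h0 := Real.rpow_add hs (κ - 1) 1
        rw [Real.rpow_one] at h0
        rw [show κ - 1 + 1 = κ by ring] at h0
        exact h0
      have hDG : |ν x - ν y - γfn x y| ≤
          (((2:ℝ) ^ κ + 2) * Mν + (A.card : ℝ) * Mbb) * s ^ (κ - 1) := by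
        rw [hsκ, ← mul_assoc] at hcomb
        exact le_of_mul_le_mul_right hcomb hs
      have hD : |ν y - ν x| ≤ |ν x - ν y - γfn x y| + |γfn x y| := by
        rw [abs_sub_comm (ν y) (ν x)]
        have := abs_sub (ν x - ν y - γfn x y) (-γfn x y)
        have heq : (ν x - ν y - γfn x y) - (-γfn x y) = ν x - ν y := by ring
        rw [heq, abs_neg] at this
        exact this
      have hP : (0:ℝ) ≤ s ^ (κ - 1) := Real.rpow_nonneg hs.le _
      have hQ : (0:ℝ) ≤ ∑ β ∈ A, s ^ β :=
        Finset.sum_nonneg fun β _ => Real.rpow_nonneg hs.le _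
      have h2κ : (0:ℝ) < (2:ℝ) ^ κ := Real.rpow_pos_of_pos two_pos _
      have hn : (0:ℝ) ≤ (A.card : ℝ) := Nat.cast_nonneg _
      have hfin : |ν y - ν x| ≤
          (((2:ℝ) ^ κ + 2) * Mν + (A.card : ℝ) * Mbb) * s ^ (κ - 1) +
            Mbb * ∑ β ∈ A, s ^ β := le_trans hD (add_le_add hDG e5)
      refine le_trans hfin ?_
      have hkey : (((2:ℝ) ^ κ + 2) * Mν + (A.card : ℝ) * Mbb) * s ^ (κ - 1) +
            Mbb * ∑ β ∈ A, s ^ β ≤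
          ((2:ℝ) ^ κ + 2 + (A.card : ℝ)) * (Mν + Mb + Mbb) *
            (s ^ (κ - 1) + ∑ β ∈ A, s ^ β) := by
        nlinarith [mul_nonneg hP hMν, mul_nonneg hP hMb, mul_nonneg hP hMbb,
          mul_nonneg hQ hMν, mul_nonneg hQ hMb, mul_nonneg hQ hMbb,
          mul_nonneg (mul_nonneg h2κ.le hMb) hP, mul_nonneg (mul_nonneg h2κ.le hMbb) hP,
          mul_nonneg (mul_nonneg h2κ.le hMν) hQ, mul_nonneg (mul_nonneg h2κ.le hMb) hQ,
          mul_nonneg (mul_nonneg h2κ.le hMbb) hQ,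
          mul_nonneg (mul_nonneg hn hMν) hP, mul_nonneg (mul_nonneg hn hMb) hP,
          mul_nonneg (mul_nonneg hn hMν) hQ, mul_nonneg (mul_nonneg hn hMb) hQ,
          mul_nonneg (mul_nonneg hn hMbb) hQ]
      exact hkey
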